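/- arXiv:2106.02947 — 8 statements merged into one kernel-verified Lean document; each statement's English description precedes it below -/
import Mathlib

section
/- Let p be a prime, k ≥ 1, m = p^k, and n ≥ m. Define v_j : {0,1}ⁿ → Z_p as the reduction mod p of the j-th elementary symmetric polynomial of the inputs. Then v_0, v_1, …, v_{m−1} are linearly independent over Z_p as elements of the function space Z_p^({0,1}ⁿ). -/
lemma aux_sum_choose (p n j : ℕ) (S : Finset (Fin n)) :
    ∑ t ∈ Finset.powersetCard j (Finset.univ : Finset (Fin n)),
      ∏ i ∈ t, (if (decide (i ∈ S) : Bool) then (1 : ZMod p) else 0)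
      = (S.card.choose j : ZMod p) := by
  have h1 : ∀ t : Finset (Fin n),
      (∏ i ∈ t, (if (decide (i ∈ S) : Bool) then (1 : ZMod p) else 0))
      = if t ⊆ S then 1 else 0 := by
    intro t
    simp only [decide_eq_true_eq]
    rw [Finset.prod_boole]
    by_cases h : t ⊆ S <;> simp_all [Finset.subset_iff]
  simp only [h1]
  rw [Finset.sum_boole]
  have h2 : (Finset.powersetCard j (Finset.univ : Finset (Fin n))).filter (· ⊆ S)
      = Finset.powersetCard j S := by
    ext t
    simp only [Finset.mem_filter, Finset.mem_powersetCard, Finset.subset_univ, true_and]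
    tauto
  rw [h2, Finset.card_powersetCard]

/-- For prime `p`, `k ≥ 1`, `m = p^k ≤ n`, the mod-`p` reductions of the
elementary symmetric polynomials of degrees `0, …, m−1`, viewed as functions
`{0,1}ⁿ → Z_p`, are linearly independent over `Z_p`. -/
theorem stmt_4 (p k n : ℕ) (hp : p.Prime) (hk : 1 ≤ k) (hn : p ^ k ≤ n) :
    LinearIndependent (ZMod p)
      (fun j : Fin (p ^ k) => fun x : Fin n → Bool =>
        ∑ t ∈ Finset.powersetCard (j : ℕ) (Finset.univ : Finset (Fin n)),
          ∏ i ∈ t, (if x i then (1 : ZMod p) else 0)) := by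
  rw [Fintype.linearIndependent_iff]
  intro c hc
  have eval : ∀ s : ℕ, s < p ^ k →
      ∑ j : Fin (p ^ k), c j * ((s.choose (j : ℕ) : ℕ) : ZMod p) = 0 := by
    intro s hs
    obtain ⟨S, -, hScard⟩ := Finset.exists_subset_card_eq
      (show s ≤ (Finset.univ : Finset (Fin n)).card by
        rw [Finset.card_univ, Fintype.card_fin]; omega)
    have hx := congrFun hc (fun i => decide (i ∈ S))
    simp only [Finset.sum_apply, Pi.smul_apply, Pi.zero_apply, smul_eq_mul] at hx
    rw [← hx]
    refine Finset.sum_congr rfl fun j _ => ?_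
    rw [aux_sum_choose, hScard]
  suffices h : ∀ s : ℕ, ∀ hs : s < p ^ k, c ⟨s, hs⟩ = 0 by
    intro j
    have := h j j.2
    simpa using this
  intro s
  induction s using Nat.strong_induction_on with
  | _ s ih =>
    intro hs
    have := eval s hs
    rw [Finset.sum_eq_single ⟨s, hs⟩] at this
    · simpa using this
    · intro j _ hj
      rcases lt_trichotomy (j : ℕ) s with h | h | h
      · rw [ih j h (by exact j.2)]
        · ring
      · exact absurd (Fin.ext h) hj
      · rw [Nat.choose_eq_zero_of_lt h]
        simp
    · intro h; exact absurd (Finset.mem_univ _) h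
end

section
/- Let p be prime, k ≥ 1, m = p^k, and n ≥ m. Every function f : {0,1}ⁿ → Z_p that is fully symmetric (invariant under permuting inputs) and m-periodic (its value on an input with i+m ones equals its value on an input with i ones, whenever both counts are at most n) lies in the Z_p-span of the functions v_0, …, v_{m−1}, the reductions mod p of the elementary symmetric polynomials of degrees 0 through m−1. -/
theorem lucas_step' (p k i j : ℕ) (hp : p.Prime) (hj : j < p ^ k) :
    (((p ^ k + i).choose j : ℕ) : ZMod p) = ((i.choose j : ℕ) : ZMod p) := by
  rw [Nat.add_choose_eq]
  push_cast
  rw [Finset.sum_eq_single (0, j)]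
  · simp
  · rintro ⟨a, b⟩ hab hne
    simp only [Finset.HasAntidiagonal.mem_antidiagonal] at hab
    have ha : a ≠ 0 := by rintro rfl; exact hne (by simp [← hab])
    have ha2 : a ≠ p ^ k := by rintro rfl; omega
    have hz : ((p ^ k).choose a : ZMod p) = 0 :=
      (ZMod.natCast_eq_zero_iff _ _).mpr (Nat.Prime.dvd_choose_pow hp ha ha2)
    rw [hz, zero_mul]
  · simp

theorem lucas_mod' (p k j : ℕ) (hp : p.Prime) (hj : j < p ^ k) :
    ∀ w, ((w.choose j : ℕ) : ZMod p) = (((w % p ^ k).choose j : ℕ) : ZMod p) := by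
  intro w
  induction w using Nat.strong_induction_on with
  | _ w ih =>
    by_cases hw : w < p ^ k
    · rw [Nat.mod_eq_of_lt hw]
    · push_neg at hw
      have hm : 0 < p ^ k := pow_pos hp.pos _
      have h1 : w = p ^ k + (w - p ^ k) := by omega
      rw [h1, lucas_step' p k _ j hp hj, ih _ (by omega)]
      congr 1
      rw [← h1, Nat.mod_eq_sub_mod hw]

def luCoef (p : ℕ) (F : ℕ → ZMod p) : ℕ → ZMod p
  | i => F i - ∑ j ∈ (Finset.range i).attach, luCoef p F j.1 * (Nat.choose i j.1 : ℕ)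
  decreasing_by exact Finset.mem_range.mp j.2

theorem luCoef_spec (p : ℕ) (F : ℕ → ZMod p) (m i : ℕ) (him : i < m) :
    F i = ∑ j ∈ Finset.range m, luCoef p F j * (Nat.choose i j : ℕ) := by
  have h1 : ∑ j ∈ Finset.range m, luCoef p F j * (Nat.choose i j : ℕ)
      = ∑ j ∈ Finset.range (i+1), luCoef p F j * (Nat.choose i j : ℕ) := by
    rw [← Finset.sum_range_add_sum_Ico _ (Nat.succ_le_of_lt him)]
    have : ∑ j ∈ Finset.Ico (i+1) m, luCoef p F j * (Nat.choose i j : ℕ) = 0 := by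
      apply Finset.sum_eq_zero
      intro j hj
      rw [Nat.choose_eq_zero_of_lt (Finset.mem_Ico.mp hj).1]
      simp
    rw [this, add_zero]
  rw [h1, Finset.sum_range_succ, Nat.choose_self]
  rw [show luCoef p F i
      = F i - ∑ j ∈ (Finset.range i).attach, luCoef p F j.1 * (Nat.choose i j.1 : ℕ)
    from by rw [luCoef]]
  rw [Finset.sum_attach (Finset.range i) (fun j => luCoef p F j * (Nat.choose i j : ℕ))]
  push_cast
  ring

theorem exists_perm_comp (n : ℕ) (x y : Fin n → Bool)
    (h : (Finset.univ.filter fun i => y i = true).card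
       = (Finset.univ.filter fun i => x i = true).card) :
    ∃ σ : Equiv.Perm (Fin n), x ∘ σ = y := by
  classical
  set S := Finset.univ.filter (fun i => x i = true) with hS
  set T := Finset.univ.filter (fun i => y i = true) with hT
  have hc : (T : Finset (Fin n)).card = S.card := h
  have hcc : (Tᶜ : Finset (Fin n)).card = (Sᶜ).card := by
    rw [Finset.card_compl, Finset.card_compl, hc]
  let e1 : {i // i ∈ T} ≃ {i // i ∈ S} := Finset.equivOfCardEq hc
  let e2 : {i // i ∈ Tᶜ} ≃ {i // i ∈ Sᶜ} := Finset.equivOfCardEq hcc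
  let eT : {i // ¬ i ∈ T} ≃ {i // i ∈ Tᶜ} :=
    Equiv.subtypeEquivRight (fun i => (Finset.mem_compl).symm)
  let eS : {i // i ∈ Sᶜ} ≃ {i // ¬ i ∈ S} :=
    Equiv.subtypeEquivRight (fun i => Finset.mem_compl)
  let σ : Equiv.Perm (Fin n) :=
    (Equiv.sumCompl (· ∈ T)).symm.trans
      ((Equiv.sumCongr e1 ((eT.trans e2).trans eS)).trans (Equiv.sumCompl (· ∈ S)))
  refine ⟨σ, funext fun i => ?_⟩
  by_cases hi : i ∈ T
  · have h1 : (Equiv.sumCompl (· ∈ T)).symm i = Sum.inl ⟨i, hi⟩ :=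
      Equiv.sumCompl_symm_apply_of_pos hi
    have hσ : σ i = (e1 ⟨i, hi⟩ : Fin n) := by
      simp [σ, h1]
    have hxs : x (σ i) = true := by
      rw [hσ]
      have h2 := (e1 ⟨i, hi⟩).2
      simp only [hS, Finset.mem_filter] at h2
      exact h2.2
    have hyt : y i = true := by
      simp only [hT, Finset.mem_filter, Finset.mem_univ, true_and] at hi; exact hi
    simp [Function.comp, hxs, hyt]
  · have h1 : (Equiv.sumCompl (· ∈ T)).symm i = Sum.inr ⟨i, hi⟩ :=
      Equiv.sumCompl_symm_apply_of_neg hi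
    have hσ : σ i = (e2 (eT ⟨i, hi⟩) : Fin n) := by
      simp [σ, h1, eS]
    have hxs : x (σ i) = false := by
      rw [hσ]
      have h2 := (e2 (eT ⟨i, hi⟩)).2
      have hns : (e2 (eT ⟨i, hi⟩) : Fin n) ∉ S := Finset.mem_compl.mp h2
      simp only [hS, Finset.mem_filter, Finset.mem_univ, true_and] at hns
      exact Bool.not_eq_true _ |>.mp hns
    have hyt : y i = false := by
      simp only [hT, Finset.mem_filter, Finset.mem_univ, true_and] at hi
      exact Bool.not_eq_true _ |>.mp hi
    simp [Function.comp, hxs, hyt]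

theorem canon_weight (n w : ℕ) (hw : w ≤ n) :
    (Finset.univ.filter fun i : Fin n => (decide (i.val < w)) = true).card = w := by
  have : (Finset.univ.filter fun i : Fin n => (decide (i.val < w)) = true)
      = Finset.attachFin (Finset.range w)
          (fun m hm => lt_of_lt_of_le (Finset.mem_range.mp hm) hw) := by
    ext i; simp [Finset.mem_attachFin]
  rw [this, Finset.card_attachFin, Finset.card_range]

theorem elem_sym_eval (n j p : ℕ) (x : Fin n → Bool) :
    ∑ t ∈ Finset.powersetCard j (Finset.univ : Finset (Fin n)),
      ∏ i ∈ t, (if x i then (1 : ZMod p) else 0)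
    = ((Finset.univ.filter fun i => x i = true).card.choose j : ZMod p) := by
  have h1 : ∀ t : Finset (Fin n), (∏ i ∈ t, (if x i then (1 : ZMod p) else 0))
      = if t ⊆ Finset.univ.filter (fun i => x i = true) then 1 else 0 := by
    intro t
    rw [Finset.prod_boole]
    congr 1
    simp [Finset.subset_iff]
  simp_rw [h1]
  rw [Finset.sum_boole]
  rw [show Finset.filter (fun t => t ⊆ Finset.filter (fun i => x i = true) Finset.univ)
        (Finset.powersetCard j Finset.univ)
      = Finset.powersetCard j (Finset.filter (fun i => x i = true) Finset.univ) by
    ext t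
    simp [Finset.mem_powersetCard, and_comm]]
  rw [Finset.card_powersetCard]

/-- For prime `p`, `k ≥ 1`, `m = p^k ≤ n`: every fully symmetric, `m`-periodic
function `f : {0,1}ⁿ → Z_p` lies in the `Z_p`-span of the mod-`p` elementary
symmetric functions of degrees `0, …, m−1`. -/
theorem stmt_5 (p k n : ℕ) (hp : p.Prime) (hk : 1 ≤ k) (hn : p ^ k ≤ n)
    (f : (Fin n → Bool) → ZMod p)
    (hsym : ∀ (σ : Equiv.Perm (Fin n)) (x : Fin n → Bool), f (x ∘ σ) = f x)
    (hper : ∀ x y : Fin n → Bool,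
      (Finset.univ.filter fun i => y i = true).card
        = (Finset.univ.filter fun i => x i = true).card + p ^ k → f y = f x) :
    f ∈ Submodule.span (ZMod p)
      (Set.range (fun j : Fin (p ^ k) => fun x : Fin n → Bool =>
        ∑ t ∈ Finset.powersetCard (j : ℕ) (Finset.univ : Finset (Fin n)),
          ∏ i ∈ t, (if x i then (1 : ZMod p) else 0))) := by
  classical
  set m := p ^ k with hm
  have hm0 : 0 < m := pow_pos hp.pos _
  set v : Fin m → (Fin n → Bool) → ZMod p := (fun j : Fin m => fun x : Fin n → Bool =>
        ∑ t ∈ Finset.powersetCard (j : ℕ) (Finset.univ : Finset (Fin n)),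
          ∏ i ∈ t, (if x i then (1 : ZMod p) else 0)) with hv
  -- canonical inputs and F
  set canon : ℕ → (Fin n → Bool) := fun w => fun i => decide (i.val < w) with hcanon
  set F : ℕ → ZMod p := fun w => f (canon w) with hF
  set c : ℕ → ZMod p := luCoef p F with hc
  -- f x = F (weight x) for weight x ≤ n
  have hfx : ∀ x : Fin n → Bool,
      f x = F ((Finset.univ.filter fun i => x i = true).card) := by
    intro x
    set w := (Finset.univ.filter fun i => x i = true).card with hw
    have hwn : w ≤ n := by
      calc w ≤ (Finset.univ : Finset (Fin n)).card := Finset.card_filter_le _ _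
        _ = n := by simp
    have hcard : (Finset.univ.filter fun i => x i = true).card
        = (Finset.univ.filter fun i => canon w i = true).card := by
      rw [← hw, canon_weight n w hwn]
    obtain ⟨σ, hσ⟩ := exists_perm_comp n (canon w) x hcard
    rw [← hσ, hsym]
  -- F w = F (w % m) for w ≤ n
  have hFmod : ∀ w ≤ n, F w = F (w % m) := by
    intro w
    induction w using Nat.strong_induction_on with
    | _ w ih =>
      intro hwn
      by_cases hlt : w < m
      · rw [Nat.mod_eq_of_lt hlt]
      · push_neg at hlt
        have hsub : F w = F (w - m) := by
          apply hper (canon (w - m)) (canon w)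
          rw [canon_weight n w hwn, canon_weight n (w - m) (by omega)]
          omega
        rw [hsub, ih (w - m) (by omega) (by omega), Nat.mod_eq_sub_mod hlt]
  -- main functional identity
  have key : f = ∑ j : Fin m, c (j : ℕ) • v j := by
    funext x
    set w := (Finset.univ.filter fun i => x i = true).card with hw
    have hwn : w ≤ n := by
      calc w ≤ (Finset.univ : Finset (Fin n)).card := Finset.card_filter_le _ _
        _ = n := by simp
    have h1 : f x = F (w % m) := by rw [hfx x, ← hw, hFmod w hwn]
    have h2 : F (w % m) = ∑ j ∈ Finset.range m, c j * (Nat.choose (w % m) j : ℕ) :=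
      luCoef_spec p F m (w % m) (Nat.mod_lt _ hm0)
    have h3 : ∀ j ∈ Finset.range m,
        c j * ((Nat.choose (w % m) j : ℕ) : ZMod p) = c j * ((Nat.choose w j : ℕ) : ZMod p) := by
      intro j hj
      rw [lucas_mod' p k j hp (Finset.mem_range.mp hj) w]
    have h4 : (∑ j : Fin m, c (j : ℕ) • v j) x
        = ∑ j ∈ Finset.range m, c j * ((Nat.choose w j : ℕ) : ZMod p) := by
      rw [Finset.sum_apply]
      rw [← Fin.sum_univ_eq_sum_range (fun j => c j * ((Nat.choose w j : ℕ) : ZMod p)) m]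
      apply Finset.sum_congr rfl
      intro j _
      rw [Pi.smul_apply, smul_eq_mul, hv]
      congr 1
      exact elem_sym_eval n (j : ℕ) p x
    rw [h1, h2, h4, Finset.sum_congr rfl h3]
  rw [key]
  apply Submodule.sum_mem
  intro j _
  exact Submodule.smul_mem _ _ (Submodule.subset_span ⟨j, rfl⟩)
end

section
/- For every prime p and integer k ≥ 1 there is a polynomial w over Z_p in n variables of degree at most p^k − 1 such that for all x ∈ {0,1}ⁿ, w(x) = 0 if the number of zeros among x₁,…,xₙ is divisible by p^k, and w(x) = 1 otherwise. -/
open Finset MvPolynomial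

lemma digits_dvd {p z k : ℕ} (hp : 2 ≤ p) (h : ∀ j < k, p ∣ z / p ^ j) : p ^ k ∣ z := by
  induction k with
  | zero => simp
  | succ k ih =>
    obtain ⟨m, hm⟩ := ih (fun j hj => h j (hj.trans (Nat.lt_succ_self k)))
    have hpk : 0 < p ^ k := pow_pos (by omega) k
    have := h k (Nat.lt_succ_self k)
    rw [hm, Nat.mul_div_cancel_left _ hpk] at this
    obtain ⟨t, ht⟩ := this
    exact ⟨t, by rw [hm, ht, pow_succ]; ring⟩

lemma choose_pow_mod {p z j : ℕ} [Fact p.Prime] :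
    ((z.choose (p ^ j) : ZMod p)) = ((z / p ^ j : ℕ) : ZMod p) := by
  have h := Choose.choose_modEq_choose_mul_prod_range_choose (n := z) (k := p ^ j) (p := p) j
  have hp : 2 ≤ p := (Fact.out : p.Prime).two_le
  have h1 : ∀ i ∈ Finset.range j, (z / p ^ i % p).choose (p ^ j / p ^ i % p) = 1 := by
    intro i hi
    rw [Nat.pow_div (Finset.mem_range.mp hi).le (by omega),
      Nat.dvd_iff_mod_eq_zero.mp (dvd_pow_self p (by
        have := Finset.mem_range.mp hi; omega)), Nat.choose_zero_right]
  have h2 : p ^ j / p ^ j = 1 := Nat.div_self (pow_pos (by omega) j)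
  rw [Finset.prod_congr rfl h1, Finset.prod_const_one, h2, Nat.choose_one_right] at h
  have h' := (ZMod.intCast_eq_intCast_iff' _ _ _).mpr h
  have : ((z.choose (p ^ j) : ℤ) : ZMod p) = ((z / p ^ j * 1 : ℕ) : ZMod p) := by exact_mod_cast h'
  simpa using this

lemma eval_E {p n : ℕ} (d : ℕ) (x : Fin n → Bool) :
    MvPolynomial.eval (fun i => if x i then (1 : ZMod p) else 0)
      (∑ S ∈ Finset.powersetCard d (Finset.univ : Finset (Fin n)), ∏ i ∈ S, (1 - X i)) =
    ((Finset.univ.filter fun i => x i = false).card.choose d : ZMod p) := by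
  set F := (Finset.univ.filter fun i => x i = false) with hF
  rw [map_sum]
  have key : ∀ S ∈ Finset.powersetCard d (Finset.univ : Finset (Fin n)),
      MvPolynomial.eval (fun i => if x i then (1 : ZMod p) else 0) (∏ i ∈ S, (1 - X i)) =
      if S ⊆ F then 1 else 0 := by
    intro S _
    rw [map_prod]
    by_cases hS : S ⊆ F
    · rw [if_pos hS, Finset.prod_eq_one]
      intro i hi
      have : x i = false := (Finset.mem_filter.mp (hS hi)).2
      simp [this]
    · obtain ⟨i, hi, hiF⟩ := Finset.not_subset.mp hS
      have : x i = true := by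
        by_contra h
        exact hiF (Finset.mem_filter.mpr ⟨Finset.mem_univ i, by simpa using h⟩)
      rw [Finset.prod_eq_zero hi (by simp [this]), if_neg hS]
  rw [Finset.sum_congr rfl key, Finset.sum_boole]
  congr 1
  rw [← Finset.card_powersetCard]
  congr 1
  ext S
  simp [Finset.mem_powersetCard, Finset.subset_univ, and_comm]


lemma geom_aux (p k : ℕ) (hp : 1 ≤ p) : ∑ j ∈ Finset.range k, p ^ j * (p - 1) = p ^ k - 1 := by
  induction k with
  | zero => simp
  | succ k ih =>
    rw [Finset.sum_range_succ, ih, pow_succ]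
    have h1 : 1 ≤ p ^ k := Nat.one_le_pow _ _ hp
    have h2 : p ^ k * (p - 1) = p ^ k * p - p ^ k := by
      rw [Nat.mul_sub]; ring_nf
    have h3 : p ^ k ≤ p ^ k * p := Nat.le_mul_of_pos_right _ (by omega)
    omega

lemma deg_E {p n : ℕ} (d : ℕ) :
    (∑ S ∈ Finset.powersetCard d (Finset.univ : Finset (Fin n)),
      ∏ i ∈ S, (1 - X i : MvPolynomial (Fin n) (ZMod p))).totalDegree ≤ d := by
  refine MvPolynomial.totalDegree_finsetSum_le (fun S hS => ?_)
  refine le_trans (MvPolynomial.totalDegree_finset_prod _ _) ?_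
  have : ∀ i ∈ S, (1 - X i : MvPolynomial (Fin n) (ZMod p)).totalDegree ≤ 1 := by
    intro i _
    refine le_trans (MvPolynomial.totalDegree_sub _ _) ?_
    refine max_le ?_ ?_
    · simp [MvPolynomial.totalDegree_one]
    · rw [show (X i : MvPolynomial (Fin n) (ZMod p)) =
          MvPolynomial.monomial (Finsupp.single i 1) 1 from rfl]
      exact le_trans (MvPolynomial.totalDegree_monomial_le _ _) (by simp)
  calc ∑ i ∈ S, (1 - X i : MvPolynomial (Fin n) (ZMod p)).totalDegree
      ≤ ∑ _i ∈ S, 1 := Finset.sum_le_sum this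
    _ = S.card := by simp
    _ = d := (Finset.mem_powersetCard.mp hS).2

/-- For every prime `p` and `k ≥ 1` there is an `n`-variable polynomial `w`
over `Z_p` of total degree at most `p^k − 1` such that on boolean inputs,
`w(x) = 0` iff the number of zeros among the inputs is divisible by `p^k`,
and `w(x) = 1` otherwise. -/
theorem stmt_6 (p k n : ℕ) (hp : p.Prime) (hk : 1 ≤ k) :
    ∃ w : MvPolynomial (Fin n) (ZMod p),
      w.totalDegree ≤ p ^ k - 1 ∧
      ∀ x : Fin n → Bool,
        MvPolynomial.eval (fun i => if x i then (1 : ZMod p) else 0) w =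
          (if p ^ k ∣ (Finset.univ.filter fun i => x i = false).card then 0 else 1) := by
  haveI : Fact p.Prime := ⟨hp⟩
  have hp2 : 2 ≤ p := hp.two_le
  set E : ℕ → MvPolynomial (Fin n) (ZMod p) := fun d =>
    ∑ S ∈ Finset.powersetCard d (Finset.univ : Finset (Fin n)), ∏ i ∈ S, (1 - X i) with hE
  refine ⟨1 - ∏ j ∈ Finset.range k, (1 - (E (p ^ j)) ^ (p - 1)), ?_, ?_⟩
  · refine le_trans (MvPolynomial.totalDegree_sub _ _) ?_
    rw [MvPolynomial.totalDegree_one]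
    refine max_le (Nat.zero_le _) ?_
    refine le_trans (MvPolynomial.totalDegree_finset_prod _ _) ?_
    rw [← geom_aux p k (by omega)]
    refine Finset.sum_le_sum (fun j _ => ?_)
    refine le_trans (MvPolynomial.totalDegree_sub _ _) ?_
    rw [MvPolynomial.totalDegree_one]
    refine max_le (Nat.zero_le _) ?_
    refine le_trans (MvPolynomial.totalDegree_pow _ _) ?_
    rw [mul_comm]
    exact Nat.mul_le_mul_right _ (deg_E _)
  · intro x
    set z := (Finset.univ.filter fun i => x i = false).card with hz
    have hev : ∀ j, MvPolynomial.eval (fun i => if x i then (1 : ZMod p) else 0) (E (p ^ j)) =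
        ((z / p ^ j : ℕ) : ZMod p) := fun j => (eval_E (p ^ j) x).trans choose_pow_mod
    rw [map_sub, map_one, map_prod]
    have hfac : ∀ j, MvPolynomial.eval (fun i => if x i then (1 : ZMod p) else 0)
        (1 - (E (p ^ j)) ^ (p - 1)) =
        if p ∣ z / p ^ j then 1 else 0 := by
      intro j
      rw [map_sub, map_one, map_pow, hev]
      by_cases hd : p ∣ z / p ^ j
      · rw [if_pos hd, (ZMod.natCast_eq_zero_iff _ _).mpr hd,
          zero_pow (by omega), sub_zero]
      · rw [if_neg hd, ZMod.pow_card_sub_one_eq_one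
          (fun h => hd ((ZMod.natCast_eq_zero_iff _ _).mp h)), sub_self]
    rw [Finset.prod_congr rfl (fun j _ => hfac j)]
    by_cases hdvd : p ^ k ∣ z
    · rw [if_pos hdvd, Finset.prod_eq_one, sub_self]
      intro j hj
      rw [if_pos]
      exact (Nat.dvd_div_iff_mul_dvd (dvd_trans (pow_dvd_pow p (Finset.mem_range.mp hj).le) hdvd)).mpr
        (by rw [← pow_succ]; exact dvd_trans (pow_dvd_pow p (Finset.mem_range.mp hj)) hdvd)
    · rw [if_neg hdvd]
      obtain ⟨j, hjk, hj⟩ : ∃ j < k, ¬ p ∣ z / p ^ j := by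
        by_contra h
        push_neg at h
        exact hdvd (digits_dvd hp2 h)
      rw [Finset.prod_eq_zero (Finset.mem_range.mpr hjk) ((if_neg hj : (if p ∣ z / p ^ j then (1 : ZMod p) else 0) = 0)), sub_zero]
end

section
/- Let f : {0,1}ⁿ → {0,1} be nonconstant, and let S(f) be the smaller of the two preimages f⁻¹(0), f⁻¹(1). Then by fixing at most log₂|S(f)| variables of f to constants in {0,1}, one obtains a nonconstant function g on the remaining variables whose smaller preimage has exactly one element (i.e., g is a spike). -/
/-- The subdomain of `{0,1}ⁿ` obtained by fixing the variables in `I` to the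
constants prescribed by `c`. -/
def restrDom (n : ℕ) (I : Finset (Fin n)) (c : Fin n → Bool) :
    Finset (Fin n → Bool) :=
  Finset.univ.filter (fun x => ∀ i ∈ I, x i = c i)

lemma mem_restrDom {n : ℕ} {I : Finset (Fin n)} {c : Fin n → Bool} {x : Fin n → Bool} :
    x ∈ restrDom n I c ↔ ∀ i ∈ I, x i = c i := by
  simp [restrDom]

lemma restrDom_insert {n : ℕ} (I : Finset (Fin n)) (c : Fin n → Bool) (i : Fin n)
    (hi : i ∉ I) (b : Bool) :
    restrDom n (insert i I) (Function.update c i b) =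
      (restrDom n I c).filter (fun x => x i = b) := by
  ext x
  simp only [mem_restrDom, Finset.mem_filter, Finset.mem_insert]
  constructor
  · intro h
    refine ⟨fun j hj => ?_, ?_⟩
    · have hji : j ≠ i := by rintro rfl; exact hi hj
      have := h j (Or.inr hj)
      rwa [Function.update_of_ne hji] at this
    · have := h i (Or.inl rfl)
      rwa [Function.update_self] at this
  · rintro ⟨h1, h2⟩ j hj
    rcases hj with rfl | hj
    · rwa [Function.update_self]
    · have hji : j ≠ i := by rintro rfl; exact hi hj
      rw [Function.update_of_ne hji]
      exact h1 j hj

lemma card_side_eq {n : ℕ} (I : Finset (Fin n)) (c : Fin n → Bool) (i : Fin n)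
    (hi : i ∉ I) (b : Bool) :
    ((restrDom n I c).filter (fun x => x i = b)).card =
      ((restrDom n I c).filter (fun x => x i = !b)).card := by
  refine Finset.card_bij' (fun x _ => Function.update x i (!x i))
    (fun x _ => Function.update x i (!x i)) ?_ ?_ ?_ ?_
  · intro x hx
    rw [Finset.mem_filter, mem_restrDom] at hx ⊢
    obtain ⟨hx1, hx2⟩ := hx
    refine ⟨fun j hj => ?_, ?_⟩
    · have hji : j ≠ i := by rintro rfl; exact hi hj
      rw [Function.update_of_ne hji]
      exact hx1 j hj
    · rw [Function.update_self, hx2]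
  · intro x hx
    rw [Finset.mem_filter, mem_restrDom] at hx ⊢
    obtain ⟨hx1, hx2⟩ := hx
    refine ⟨fun j hj => ?_, ?_⟩
    · have hji : j ≠ i := by rintro rfl; exact hi hj
      rw [Function.update_of_ne hji]
      exact hx1 j hj
    · rw [Function.update_self, hx2, Bool.not_not]
  · intro x _
    funext j
    by_cases hji : j = i
    · subst hji; simp
    · simp [Function.update_of_ne hji]
  · intro x _
    funext j
    by_cases hji : j = i
    · subst hji; simp
    · simp [Function.update_of_ne hji]

lemma filter_bool_sum {α : Type*} [DecidableEq α] (D : Finset α) (g : α → Bool) (b : Bool) :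
    (D.filter fun x => g x = b).card + (D.filter fun x => g x = !b).card = D.card := by
  have := Finset.card_filter_add_card_filter_not (s := D) (p := fun x => g x = b)
  have he : (D.filter fun x => ¬ g x = b) = (D.filter fun x => g x = !b) := by
    apply Finset.filter_congr
    intro x _
    cases b <;> cases hg : g x <;> simp
  rw [he] at this
  exact this

lemma min_bool_eq {g : Bool → ℕ} (b : Bool) (h : g b ≤ g (!b)) :
    min (g false) (g true) = g b := by
  cases b
  · exact min_eq_left (by simpa using h)
  · exact min_eq_right (by simpa using h)

lemma exists_min_bool (g : Bool → ℕ) : ∃ b, g b ≤ g (!b) := by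
  rcases le_total (g false) (g true) with h | h
  · exact ⟨false, by simpa using h⟩
  · exact ⟨true, by simpa using h⟩

lemma aux {n : ℕ} (f : (Fin n → Bool) → Bool) :
    ∀ m : ℕ, ∀ I : Finset (Fin n), ∀ c : Fin n → Bool,
      (∃ x ∈ restrDom n I c, f x = true) → (∃ x ∈ restrDom n I c, f x = false) →
      min ((restrDom n I c).filter fun x => f x = false).card
          ((restrDom n I c).filter fun x => f x = true).card = m →
      ∃ (I' : Finset (Fin n)) (c' : Fin n → Bool),
        I'.card ≤ I.card + Nat.log 2 m ∧
        (∃ x ∈ restrDom n I' c', f x = true) ∧ (∃ x ∈ restrDom n I' c', f x = false) ∧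
        min ((restrDom n I' c').filter fun x => f x = false).card
            ((restrDom n I' c').filter fun x => f x = true).card = 1 := by
  intro m
  induction m using Nat.strong_induction_on with
  | _ m ih =>
  intro I c ht hfa hm
  have hTpos : 0 < ((restrDom n I c).filter fun x => f x = true).card := by
    obtain ⟨x, hx, hfx⟩ := ht
    exact Finset.card_pos.mpr ⟨x, Finset.mem_filter.mpr ⟨hx, hfx⟩⟩
  have hFpos : 0 < ((restrDom n I c).filter fun x => f x = false).card := by
    obtain ⟨x, hx, hfx⟩ := hfa
    exact Finset.card_pos.mpr ⟨x, Finset.mem_filter.mpr ⟨hx, hfx⟩⟩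
  have hm1 : 1 ≤ m := by rw [← hm]; exact le_min hFpos hTpos
  rcases Nat.lt_or_ge m 2 with hm2 | hm2
  · exact ⟨I, c, by simp, ht, hfa, by rw [hm]; omega⟩
  -- m ≥ 2 : pick the smaller pile's color b0
  obtain ⟨b0, hb0le⟩ := exists_min_bool
    (fun b => ((restrDom n I c).filter fun x => f x = b).card)
  have hb0card : ((restrDom n I c).filter fun x => f x = b0).card = m := by
    rw [← hm]
    exact (min_bool_eq (g := fun b => ((restrDom n I c).filter fun x => f x = b).card)
      b0 hb0le).symm
  -- two distinct points in the smaller pile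
  obtain ⟨x, hx, y, hy, hxy⟩ := Finset.one_lt_card.mp
    (by omega : 1 < ((restrDom n I c).filter fun x => f x = b0).card)
  obtain ⟨i, hxyi⟩ : ∃ i : Fin n, x i ≠ y i := by
    by_contra h
    push_neg at h
    exact hxy (funext h)
  have hxD : x ∈ restrDom n I c := (Finset.mem_filter.mp hx).1
  have hyD : y ∈ restrDom n I c := (Finset.mem_filter.mp hy).1
  have hiI : i ∉ I := by
    intro hiI
    exact hxyi ((mem_restrDom.mp hxD i hiI).trans (mem_restrDom.mp hyD i hiI).symm)
  -- both sides of the smaller pile are nonempty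
  have hQpos : ∀ b : Bool,
      0 < (((restrDom n I c).filter fun x => f x = b0).filter fun z => z i = b).card := by
    intro b
    rcases Bool.eq_or_eq_not (x i) b with hb | hb
    · exact Finset.card_pos.mpr ⟨x, Finset.mem_filter.mpr ⟨hx, hb⟩⟩
    · refine Finset.card_pos.mpr ⟨y, Finset.mem_filter.mpr ⟨hy, ?_⟩⟩
      rcases Bool.eq_or_eq_not (y i) b with hb' | hb'
      · exact hb'
      · exact absurd (hb.trans hb'.symm) hxyi
  have hQsum : ∀ b : Bool,
      (((restrDom n I c).filter fun x => f x = b0).filter fun z => z i = b).card +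
      (((restrDom n I c).filter fun x => f x = b0).filter fun z => z i = !b).card = m := by
    intro b
    rw [filter_bool_sum ((restrDom n I c).filter fun x => f x = b0) (fun z => z i) b, hb0card]
  -- choose the side b1 with the smaller part
  obtain ⟨b1, hb1le⟩ := exists_min_bool
    (fun b => (((restrDom n I c).filter fun x => f x = b0).filter fun z => z i = b).card)
  have ha1 : 1 ≤ (((restrDom n I c).filter fun x => f x = b0).filter fun z => z i = b1).card :=
    hQpos b1
  have h2a : 2 * (((restrDom n I c).filter fun x => f x = b0).filter fun z => z i = b1).card ≤ m := by
    have := hQsum b1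
    linarith
  -- the new domain
  have hDJ : restrDom n (insert i I) (Function.update c i b1) =
      (restrDom n I c).filter (fun z => z i = b1) := restrDom_insert I c i hiI b1
  -- cardinality of the new domain is at least m
  have hDsum : ((restrDom n I c).filter fun z => f z = b0).card +
      ((restrDom n I c).filter fun z => f z = !b0).card = (restrDom n I c).card :=
    filter_bool_sum (restrDom n I c) f b0
  have hDge : 2 * m ≤ (restrDom n I c).card := by linarith
  have hside : ((restrDom n I c).filter (fun z => z i = b1)).card =
      ((restrDom n I c).filter (fun z => z i = !b1)).card := card_side_eq I c i hiI b1
  have hsidesum : ((restrDom n I c).filter (fun z => z i = b1)).card +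
      ((restrDom n I c).filter (fun z => z i = !b1)).card = (restrDom n I c).card :=
    filter_bool_sum (restrDom n I c) (fun z => z i) b1
  have hDJcard : m ≤ (restrDom n (insert i I) (Function.update c i b1)).card := by
    rw [hDJ]; linarith
  -- the new pile of color b0 is exactly the chosen side of the old smaller pile
  have hP'b0 : (restrDom n (insert i I) (Function.update c i b1)).filter (fun z => f z = b0) =
      ((restrDom n I c).filter fun x => f x = b0).filter (fun z => z i = b1) := by
    rw [hDJ, Finset.filter_filter, Finset.filter_filter]
    exact Finset.filter_congr (fun z _ => by tauto)
  have hP'split : ((restrDom n (insert i I) (Function.update c i b1)).filter fun z => f z = b0).card +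
      ((restrDom n (insert i I) (Function.update c i b1)).filter fun z => f z = !b0).card =
      (restrDom n (insert i I) (Function.update c i b1)).card :=
    filter_bool_sum (restrDom n (insert i I) (Function.update c i b1)) f b0
  have hP'b0card : ((restrDom n (insert i I) (Function.update c i b1)).filter fun z => f z = b0).card =
      (((restrDom n I c).filter fun x => f x = b0).filter fun z => z i = b1).card := by
    rw [hP'b0]
  have hP'le : ((restrDom n (insert i I) (Function.update c i b1)).filter fun z => f z = b0).card ≤
      ((restrDom n (insert i I) (Function.update c i b1)).filter fun z => f z = !b0).card := by
    linarith
  have hb0pos : 0 < ((restrDom n (insert i I) (Function.update c i b1)).filter fun z => f z = b0).card := by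
    linarith
  have hnb0pos : 0 < ((restrDom n (insert i I) (Function.update c i b1)).filter fun z => f z = !b0).card := by
    linarith
  -- both colors in the new domain
  have hboth : ∀ b : Bool, ∃ z ∈ restrDom n (insert i I) (Function.update c i b1), f z = b := by
    intro b
    rcases Bool.eq_or_eq_not b b0 with rfl | rfl
    · obtain ⟨z, hz⟩ := Finset.card_pos.mp hb0pos
      have := Finset.mem_filter.mp hz
      exact ⟨z, this.1, this.2⟩
    · obtain ⟨z, hz⟩ := Finset.card_pos.mp hnb0pos
      have := Finset.mem_filter.mp hz
      exact ⟨z, this.1, this.2⟩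
  have hmin' : min ((restrDom n (insert i I) (Function.update c i b1)).filter fun z => f z = false).card
      ((restrDom n (insert i I) (Function.update c i b1)).filter fun z => f z = true).card =
      (((restrDom n I c).filter fun x => f x = b0).filter fun z => z i = b1).card := by
    rw [min_bool_eq (g := fun b =>
      ((restrDom n (insert i I) (Function.update c i b1)).filter fun z => f z = b).card) b0 hP'le]
    exact hP'b0card
  -- apply the induction hypothesis
  obtain ⟨I', c', hcard, ht'', hf'', hmin''⟩ := ih
    ((((restrDom n I c).filter fun x => f x = b0).filter fun z => z i = b1).card)
    (by linarith) (insert i I) (Function.update c i b1) (hboth true) (hboth false) hmin'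
  refine ⟨I', c', ?_, ht'', hf'', hmin''⟩
  have hJcard : (insert i I).card = I.card + 1 := Finset.card_insert_of_notMem hiI
  have hlog : Nat.log 2 (((restrDom n I c).filter fun x => f x = b0).filter fun z => z i = b1).card
      + 1 ≤ Nat.log 2 m := by
    have h1 : Nat.log 2 ((((restrDom n I c).filter fun x => f x = b0).filter fun z => z i = b1).card * 2) =
        Nat.log 2 (((restrDom n I c).filter fun x => f x = b0).filter fun z => z i = b1).card + 1 :=
      Nat.log_mul_base (by norm_num) (Nat.one_le_iff_ne_zero.mp ha1)
    have h2 : Nat.log 2 ((((restrDom n I c).filter fun x => f x = b0).filter fun z => z i = b1).card * 2)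
        ≤ Nat.log 2 m := Nat.log_mono_right (by linarith)
    linarith
  linarith

/-- A nonconstant boolean function `f` can be turned into a spike (a nonconstant
function whose smaller pile is a singleton) by fixing at most `log₂ |S(f)|`
variables to constants, where `S(f)` is the smaller pile of `f`. -/
theorem stmt_7 (n : ℕ) (f : (Fin n → Bool) → Bool) (hf : ∃ x y, f x ≠ f y) :
    ∃ (I : Finset (Fin n)) (c : Fin n → Bool),
      I.card ≤ Nat.log 2
        (min (Finset.univ.filter fun x : Fin n → Bool => f x = false).card
             (Finset.univ.filter fun x : Fin n → Bool => f x = true).card) ∧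
      (∃ x ∈ restrDom n I c, f x = true) ∧ (∃ x ∈ restrDom n I c, f x = false) ∧
      min ((restrDom n I c).filter fun x => f x = false).card
          ((restrDom n I c).filter fun x => f x = true).card = 1 := by
  have h0 : restrDom n ∅ (fun _ => false) = Finset.univ := by
    ext x; simp [restrDom]
  obtain ⟨x, y, hxy⟩ := hf
  have hboth : (∃ z, f z = true) ∧ (∃ z, f z = false) := by
    cases hx : f x <;> cases hy : f y <;> first
      | (exact absurd (hx.trans hy.symm) hxy)
      | exact ⟨⟨_, by assumption⟩, ⟨_, by assumption⟩⟩
  obtain ⟨⟨zt, hzt⟩, ⟨zf, hzf⟩⟩ := hboth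
  obtain ⟨I', c', hcard, ht, hfa, hmin⟩ := aux f
    (min ((restrDom n ∅ (fun _ => false)).filter fun x => f x = false).card
         ((restrDom n ∅ (fun _ => false)).filter fun x => f x = true).card)
    ∅ (fun _ => false)
    ⟨zt, by rw [h0]; exact Finset.mem_univ _, hzt⟩
    ⟨zf, by rw [h0]; exact Finset.mem_univ _, hzf⟩ rfl
  refine ⟨I', c', ?_, ht, hfa, hmin⟩
  rw [h0] at hcard
  simpa using hcard
end

section
/- For any nonconstant boolean function f : {0,1}ⁿ → {0,1} with smaller pile S(f) of size ≥ 2, there exist an index i and a constant c ∈ {0,1} such that the restriction f|_{x_i=c} is nonconstant and the size of its smaller pile is at most |S(f)|/2. -/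
/-- The subdomain of `{0,1}ⁿ` obtained by fixing the variable `i` to `c`. -/
def fixVar (n : ℕ) (i : Fin n) (c : Bool) : Finset (Fin n → Bool) :=
  Finset.univ.filter (fun x => x i = c)

lemma fix_split (n : ℕ) (i : Fin n) (p : (Fin n → Bool) → Prop) [DecidablePred p] :
    ((fixVar n i false).filter p).card + ((fixVar n i true).filter p).card
      = (Finset.univ.filter p).card := by
  have h1 : ∀ c, (fixVar n i c).filter p = (Finset.univ.filter p).filter (fun x => x i = c) := by
    intro c
    ext x
    simp [fixVar, Finset.mem_filter, and_comm]
  rw [h1, h1]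
  have := Finset.card_filter_add_card_filter_not
    (s := Finset.univ.filter p) (p := fun x : Fin n → Bool => x i = false)
  simpa using this

lemma fix_card (n : ℕ) (i : Fin n) (c : Bool) :
    2 * (fixVar n i c).card = 2 ^ n := by
  have hb : (fixVar n i false).card = (fixVar n i true).card := by
    apply Finset.card_bij' (fun x _ => Function.update x i true)
      (fun x _ => Function.update x i false)
    all_goals
      intro a ha
      simp [fixVar] at ha
      simp [fixVar, ha]
  have hsum : (fixVar n i false).card + (fixVar n i true).card = 2 ^ n := by
    have := fix_split n i (fun _ : Fin n → Bool => True)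
    simpa [Finset.card_univ] using this
  cases c <;> omega

lemma helper (n : ℕ) (f : (Fin n → Bool) → Bool) (b : Bool)
    (hle : (Finset.univ.filter fun x : Fin n → Bool => f x = b).card
        ≤ (Finset.univ.filter fun x : Fin n → Bool => f x = !b).card)
    (h2 : 2 ≤ (Finset.univ.filter fun x : Fin n → Bool => f x = b).card) :
    ∃ (i : Fin n) (c : Bool),
      (∃ x ∈ fixVar n i c, f x = b) ∧ (∃ x ∈ fixVar n i c, f x = !b) ∧
      2 * ((fixVar n i c).filter fun x => f x = b).card
        ≤ (Finset.univ.filter fun x : Fin n → Bool => f x = b).card := by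
  obtain ⟨a₀, ha₀, a₁, ha₁, hne⟩ := Finset.one_lt_card.mp (show 1 < (Finset.univ.filter fun x : Fin n → Bool => f x = b).card by omega)
  obtain ⟨i, hi⟩ : ∃ i, a₀ i ≠ a₁ i := by
    by_contra h; push_neg at h; exact hne (funext h)
  have ha₀f : f a₀ = b := (Finset.mem_filter.mp ha₀).2
  have ha₁f : f a₁ = b := (Finset.mem_filter.mp ha₁).2
  have hmem : ∀ c, ∃ x ∈ fixVar n i c, f x = b := by
    intro c
    by_cases h : a₀ i = c
    · exact ⟨a₀, by simp [fixVar, h], ha₀f⟩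
    · refine ⟨a₁, by simp [fixVar]; cases c <;> cases h1 : a₁ i <;> simp_all, ha₁f⟩
  have hsplit := fix_split n i (fun x => f x = b)
  have hcompl : (Finset.univ.filter fun x : Fin n → Bool => f x = b).card
      + (Finset.univ.filter fun x : Fin n → Bool => f x = !b).card = 2 ^ n := by
    have h := Finset.card_filter_add_card_filter_not
      (s := (Finset.univ : Finset (Fin n → Bool))) (p := fun x => f x = b)
    simp only [Finset.card_univ] at h
    have hcu : Fintype.card (Fin n → Bool) = 2 ^ n := by simp
    rw [hcu] at h
    have heq : (Finset.univ.filter fun x : Fin n → Bool => f x = !b)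
        = Finset.univ.filter (fun x => ¬ f x = b) := by
      ext x; simp [Bool.eq_not]
    rw [heq, h]
  -- choose c with smaller part
  obtain ⟨c, hc⟩ : ∃ c, 2 * ((fixVar n i c).filter fun x => f x = b).card
      ≤ (Finset.univ.filter fun x : Fin n → Bool => f x = b).card := by
    rcases le_total ((fixVar n i false).filter fun x => f x = b).card
        ((fixVar n i true).filter fun x => f x = b).card with h | h
    · exact ⟨false, by omega⟩
    · exact ⟨true, by omega⟩
  refine ⟨i, c, hmem c, ?_, hc⟩
  -- nonconstancy: a point with value !b in fixVar n i c
  have hfix := fix_card n i c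
  have hSpos : 1 ≤ ((fixVar n i c).filter fun x => f x = b).card := by
    obtain ⟨x, hx, hxf⟩ := hmem c
    exact Finset.card_pos.mpr ⟨x, Finset.mem_filter.mpr ⟨hx, hxf⟩⟩
  have hlt : ((fixVar n i c).filter fun x => f x = b).card < (fixVar n i c).card := by
    omega
  have hns : ¬ (fixVar n i c ⊆ (fixVar n i c).filter fun x => f x = b) :=
    fun hsub => absurd (Finset.card_le_card hsub) (by omega)
  obtain ⟨x, hx, hxn⟩ := Finset.not_subset.mp hns
  refine ⟨x, hx, ?_⟩
  rw [Bool.eq_not]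
  intro hxb
  exact hxn (Finset.mem_filter.mpr ⟨hx, hxb⟩)

/-- For a nonconstant boolean function `f` with smaller pile of size `≥ 2`,
one can fix a single variable to a constant so that the restriction is still
nonconstant and its smaller pile has at most half the size. -/
theorem stmt_8 (n : ℕ) (f : (Fin n → Bool) → Bool) (hf : ∃ x y, f x ≠ f y)
    (h2 : 2 ≤ min (Finset.univ.filter fun x : Fin n → Bool => f x = false).card
                  (Finset.univ.filter fun x : Fin n → Bool => f x = true).card) :
    ∃ (i : Fin n) (c : Bool),
      (∃ x ∈ fixVar n i c, f x = true) ∧ (∃ x ∈ fixVar n i c, f x = false) ∧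
      2 * min ((fixVar n i c).filter fun x => f x = false).card
              ((fixVar n i c).filter fun x => f x = true).card
        ≤ min (Finset.univ.filter fun x : Fin n → Bool => f x = false).card
              (Finset.univ.filter fun x : Fin n → Bool => f x = true).card := by
  rcases le_total (Finset.univ.filter fun x : Fin n → Bool => f x = false).card
      (Finset.univ.filter fun x : Fin n → Bool => f x = true).card with h | h
  · obtain ⟨i, c, h1, h0, hb⟩ := helper n f false (by simpa using h) (by omega)
    refine ⟨i, c, by simpa using h0, h1, ?_⟩
    have hmin : min ((fixVar n i c).filter fun x => f x = false).card
        ((fixVar n i c).filter fun x => f x = true).card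
        ≤ ((fixVar n i c).filter fun x => f x = false).card := min_le_left _ _
    omega
  · obtain ⟨i, c, h1, h0, hb⟩ := helper n f true (by simpa using h) (by omega)
    refine ⟨i, c, h1, by simpa using h0, ?_⟩
    have hmin : min ((fixVar n i c).filter fun x => f x = false).card
        ((fixVar n i c).filter fun x => f x = true).card
        ≤ ((fixVar n i c).filter fun x => f x = true).card := min_le_right _ _
    omega
end

section
/- Let m have prime factorization p₁^{α₁}⋯p_ω^{α_ω} with ω ≥ 2 distinct primes, and suppose nonnegative integers ν₁,…,ν_ω satisfy p₁^{ν₁}⋯p_ω^{ν_ω} > ℓ. If an integer ℓ₀ satisfies 1 ≤ ℓ₀ ≤ ℓ, then there exists an index j such that pⱼ^{νⱼ} does not divide ℓ₀. Consequently, if t_j(a) ∈ {0,1} equals 0 iff pⱼ^{νⱼ} divides ℓ₀, then Σⱼ (m/pⱼ)·t_j(a) ≡ 0 (mod m) iff ℓ₀ = 0 for integers 0 ≤ ℓ₀ ≤ ℓ. -/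
/-- Key arithmetic lemma: with `m = p₁^{α₁}⋯p_ω^{α_ω}` (`ω ≥ 2` distinct primes)
and `ℓ < p₁^{ν₁}⋯p_ω^{ν_ω}`: (1) every `1 ≤ ℓ₀ ≤ ℓ` fails divisibility by some
`pⱼ^{νⱼ}`; (2) for 0/1-valued `t` with `tⱼ = 0 ↔ pⱼ^{νⱼ} ∣ ℓ₀`, the sum
`Σⱼ (m/pⱼ)·tⱼ` vanishes mod `m` iff `ℓ₀ = 0`. -/
theorem stmt_12 (ω : ℕ) (hω : 2 ≤ ω) (p α ν : Fin ω → ℕ)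
    (hp : ∀ j, (p j).Prime) (hpinj : Function.Injective p)
    (hα : ∀ j, 1 ≤ α j) (m : ℕ) (hm : m = ∏ j, p j ^ α j)
    (ℓ : ℕ) (hℓ : ℓ < ∏ j, p j ^ ν j) :
    (∀ ℓ₀ : ℕ, 1 ≤ ℓ₀ → ℓ₀ ≤ ℓ → ∃ j, ¬ (p j ^ ν j ∣ ℓ₀)) ∧
    (∀ ℓ₀ : ℕ, ℓ₀ ≤ ℓ → ∀ t : Fin ω → ℕ, (∀ j, t j ≤ 1) →
      (∀ j, t j = 0 ↔ p j ^ ν j ∣ ℓ₀) →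
      (((∑ j, (m / p j) * t j : ℕ) : ZMod m) = 0 ↔ ℓ₀ = 0)) := by
  have hmpos : 0 < m := by
    rw [hm]
    exact Finset.prod_pos fun j _ => pow_pos (hp j).pos _
  have hsplit : ∀ j : Fin ω, m = p j ^ α j * ∏ k ∈ Finset.univ.erase j, p k ^ α k := by
    intro j
    rw [hm, ← Finset.mul_prod_erase Finset.univ _ (Finset.mem_univ j)]
  have hndvd : ∀ j : Fin ω, ¬ p j ∣ ∏ k ∈ Finset.univ.erase j, p k ^ α k := by
    intro j hdvd
    obtain ⟨k, hk, hdk⟩ := (Nat.Prime.prime (hp j)).exists_mem_finset_dvd hdvd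
    have h1 : p j ∣ p k := (hp j).dvd_of_dvd_pow hdk
    have h2 : p j = p k := ((Nat.prime_dvd_prime_iff_eq (hp j) (hp k)).mp h1)
    exact (Finset.mem_erase.mp hk).1 (hpinj h2.symm)
  have hdiv : ∀ j : Fin ω, m / p j = p j ^ (α j - 1) * ∏ k ∈ Finset.univ.erase j, p k ^ α k := by
    intro j
    have hαj := hα j
    have h1 : m = p j * (p j ^ (α j - 1) * ∏ k ∈ Finset.univ.erase j, p k ^ α k) := by
      rw [hsplit j, ← mul_assoc, ← pow_succ']
      congr 2
      omega
    rw [h1, Nat.mul_div_cancel_left _ (hp j).pos]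
  have hnd2 : ∀ j : Fin ω, ¬ p j ^ α j ∣ m / p j := by
    intro j hdvd
    have hαj := hα j
    rw [hdiv j] at hdvd
    have hc : (p j).Coprime (∏ k ∈ Finset.univ.erase j, p k ^ α k) :=
      ((Nat.Prime.coprime_iff_not_dvd (hp j)).mpr (hndvd j))
    have hc2 : (p j ^ α j).Coprime (∏ k ∈ Finset.univ.erase j, p k ^ α k) := hc.pow_left _
    have h3 := (Nat.Coprime.dvd_of_dvd_mul_right hc2 hdvd)
    have h4 := Nat.pow_dvd_pow_iff_le_right (hp j).one_lt |>.mp h3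
    omega
  have hdv3 : ∀ i j : Fin ω, i ≠ j → p j ^ α j ∣ m / p i := by
    intro i j hij
    rw [hdiv i]
    exact Dvd.dvd.mul_left (Finset.dvd_prod_of_mem _ (Finset.mem_erase.mpr ⟨hij.symm, Finset.mem_univ j⟩)) _
  have part1 : ∀ ℓ₀ : ℕ, 1 ≤ ℓ₀ → ℓ₀ ≤ ℓ → ∃ j, ¬ (p j ^ ν j ∣ ℓ₀) := by
    intro ℓ₀ h1 h2
    by_contra h
    push_neg at h
    have hcop : Set.Pairwise ↑(Finset.univ : Finset (Fin ω))
        (Function.onFun IsRelPrime fun j => p j ^ ν j) := by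
      intro a _ b _ hab
      refine Nat.coprime_iff_isRelPrime.mp ?_
      exact (((hp a).coprime_iff_not_dvd).mpr
        (fun hd => hab (hpinj ((Nat.prime_dvd_prime_iff_eq (hp a) (hp b)).mp hd)))).pow _ _
    have hprod : (∏ j, p j ^ ν j) ∣ ℓ₀ :=
      Finset.prod_dvd_of_isRelPrime hcop (fun j _ => h j)
    have := Nat.le_of_dvd h1 hprod
    omega
  refine ⟨part1, ?_⟩
  intro ℓ₀ hle t ht htiff
  haveI : NeZero m := ⟨hmpos.ne'⟩
  rw [ZMod.natCast_eq_zero_iff]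
  constructor
  · intro hdvd
    by_contra hne
    obtain ⟨j, hj⟩ := part1 ℓ₀ (Nat.one_le_iff_ne_zero.mpr hne) hle
    have htj : t j = 1 := by
      have := htiff j
      have := ht j
      omega
    have hpam : p j ^ α j ∣ m := ⟨_, hsplit j⟩
    have hpsum : p j ^ α j ∣ ∑ i, (m / p i) * t i := hpam.trans hdvd
    rw [← Finset.add_sum_erase Finset.univ _ (Finset.mem_univ j)] at hpsum
    have hrest : p j ^ α j ∣ ∑ i ∈ Finset.univ.erase j, (m / p i) * t i :=
      Finset.dvd_sum fun i hi =>
        Dvd.dvd.mul_right (hdv3 i j (Finset.mem_erase.mp hi).1) _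
    rw [add_comm] at hpsum
    have hj2 : p j ^ α j ∣ (m / p j) * t j := (Nat.dvd_add_right hrest).mp hpsum
    rw [htj, mul_one] at hj2
    exact hnd2 j hj2
  · intro h0
    subst h0
    have : ∀ j, (m / p j) * t j = 0 := fun j => by
      rw [(htiff j).mpr (dvd_zero _), mul_zero]
    simp [this]
end

section
/- Let m have ω ≥ 2 distinct prime divisors p₁ > … > p_ω, and let Z₁,…,Z_s be index sets with |Zⱼ| < pⱼ for each j ≤ s, where p₁,…,p_s ≥ ω. Suppose sᵢⱼ ∈ {0,1} for j ≤ s and i ∈ Zⱼ, and let σ = Σ_{j≤s} (m/pⱼ)·|Zⱼ| mod m. Then Σ_{j≤s} Σ_{i∈Zⱼ} (m/pⱼ)·sᵢⱼ ≡ σ (mod m) if and only if sᵢⱼ = 1 for all j ≤ s and all i ∈ Zⱼ. -/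
/-- Let `m = p₁^{α₁}⋯p_ω^{α_ω}` with `ω ≥ 2` distinct primes `p₁ > … > p_ω`,
let `Z₁,…,Z_s` be index sets with `|Zⱼ| < pⱼ` and `pⱼ ≥ ω` for `j ≤ s`, and let
`sᵢⱼ ∈ {0,1}`. With `σ = Σ_{j≤s} (m/pⱼ)·|Zⱼ|`, we have
`Σ_{j≤s} Σ_{i∈Zⱼ} (m/pⱼ)·sᵢⱼ ≡ σ (mod m)` iff all `sᵢⱼ = 1`. -/
theorem stmt_13 (ω s : ℕ) (hω : 2 ≤ ω) (hs : s ≤ ω) (p α : Fin ω → ℕ)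
    (hp : ∀ j, (p j).Prime) (hdec : StrictAnti p) (hα : ∀ j, 1 ≤ α j)
    (m : ℕ) (hm : m = ∏ j, p j ^ α j)
    (hbig : ∀ j : Fin s, ω ≤ p (Fin.castLE hs j))
    (Z : Fin s → Finset ℕ) (hZ : ∀ j, (Z j).card < p (Fin.castLE hs j))
    (t : Fin s → ℕ → ℕ) (ht : ∀ j, ∀ i ∈ Z j, t j i ≤ 1) :
    (((∑ j : Fin s, ∑ i ∈ Z j, (m / p (Fin.castLE hs j)) * t j i : ℕ) : ZMod m)
        = ((∑ j : Fin s, (m / p (Fin.castLE hs j)) * (Z j).card : ℕ) : ZMod m))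
      ↔ ∀ j, ∀ i ∈ Z j, t j i = 1 := by
  set q : Fin s → ℕ := fun j => p (Fin.castLE hs j) with hq
  have hsumle : ∀ j, ∑ i ∈ Z j, t j i ≤ (Z j).card := by
    intro j
    calc ∑ i ∈ Z j, t j i ≤ ∑ i ∈ Z j, 1 := Finset.sum_le_sum (ht j)
      _ = (Z j).card := by simp
  set d : Fin s → ℕ := fun j => (Z j).card - ∑ i ∈ Z j, t j i with hd
  have key : (∑ j, ∑ i ∈ Z j, (m / q j) * t j i) + ∑ j, (m / q j) * d j
      = ∑ j, (m / q j) * (Z j).card := by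
    rw [← Finset.sum_add_distrib]
    refine Finset.sum_congr rfl fun j _ => ?_
    rw [← Finset.mul_sum, ← Nat.mul_add, hd,
      Nat.add_sub_cancel' (hsumle j)]
  constructor
  · intro h
    -- m divides the deficit sum
    have hform : ((∑ j : Fin s, ∑ i ∈ Z j, (m / q j) * t j i : ℕ) : ZMod m)
        = ((∑ j : Fin s, (m / q j) * (Z j).card : ℕ) : ZMod m) := h
    have hdvd : m ∣ ∑ j, (m / q j) * d j := by
      have hz : ((∑ j, (m / q j) * d j : ℕ) : ZMod m) = 0 := by
        have hkey : ((∑ j : Fin s, ∑ i ∈ Z j, (m / q j) * t j i : ℕ) : ZMod m)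
            + ((∑ j, (m / q j) * d j : ℕ) : ZMod m)
            = ((∑ j : Fin s, (m / q j) * (Z j).card : ℕ) : ZMod m) := by
          rw [← Nat.cast_add, key]
        rw [hform] at hkey
        exact add_eq_left.mp hkey
      exact (ZMod.natCast_eq_zero_iff _ _).mp hz
    -- each deficit is zero
    have hdzero : ∀ j, d j = 0 := by
      intro j₀
      set j' : Fin ω := Fin.castLE hs j₀ with hj'
      set P := p j' with hP
      set a := α j' with ha
      set R := ∏ k ∈ Finset.univ.erase j', p k ^ α k with hR
      have hmPR : m = P ^ a * R := by
        rw [hm, hR, ← Finset.mul_prod_erase _ _ (Finset.mem_univ j')]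
      have hcop : Nat.Coprime P R := by
        refine Nat.Coprime.prod_right fun k hk => Nat.Coprime.pow_right _ ?_
        refine (Nat.coprime_primes (hp j') (hp k)).mpr ?_
        intro hpeq
        exact (Finset.mem_erase.mp hk).1 (hdec.injective hpeq).symm
      have hPa_dvd_sum : P ^ a ∣ ∑ j, (m / q j) * d j :=
        dvd_trans ⟨R, hmPR⟩ hdvd
      have hPa_others : ∀ k ∈ Finset.univ.erase j₀, P ^ a ∣ (m / q k) * d k := by
        intro k hk
        have hkne : Fin.castLE hs k ≠ j' := by
          intro hEq
          exact (Finset.mem_erase.mp hk).1 (Fin.castLE_injective hs hEq)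
        have hcopk : Nat.Coprime (P ^ a) (q k) := by
          refine Nat.Coprime.pow_left _ ?_
          exact (Nat.coprime_primes (hp j') (hp _)).mpr
            fun hEq => hkne (hdec.injective hEq.symm)
        have hqk : q k ∣ m := by
          rw [hm]
          exact dvd_trans (dvd_pow_self _ (Nat.one_le_iff_ne_zero.mp (hα _)))
            (Finset.dvd_prod_of_mem _ (Finset.mem_univ _))
        have : P ^ a ∣ q k * (m / q k) := by
          rw [Nat.mul_div_cancel' hqk]
          exact ⟨R, hmPR⟩
        exact Dvd.dvd.mul_right (hcopk.dvd_of_dvd_mul_left this) _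
      have hPa_term : P ^ a ∣ (m / q j₀) * d j₀ := by
        have hsplit : ∑ j, (m / q j) * d j
            = (m / q j₀) * d j₀ + ∑ k ∈ Finset.univ.erase j₀, (m / q k) * d k := by
          exact (Finset.add_sum_erase _ _ (Finset.mem_univ j₀)).symm
        have hrest : P ^ a ∣ ∑ k ∈ Finset.univ.erase j₀, (m / q k) * d k :=
          Finset.dvd_sum hPa_others
        have h2 := hPa_dvd_sum
        rw [hsplit] at h2
        have h3 := Nat.dvd_sub h2 hrest
        simpa using h3
      -- now extract P ∣ d j₀
      have hqj : q j₀ = P := rfl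
      have hPpos : 0 < P := (hp j').pos
      have hmdiv : m / P = P ^ (a - 1) * R := by
        have hPa : P ^ a = P * P ^ (a - 1) := by
          conv_lhs => rw [show a = (a - 1) + 1 from (Nat.succ_pred_eq_of_pos (hα j')).symm]
          rw [pow_succ, mul_comm]
        rw [hmPR, hPa, mul_assoc, Nat.mul_div_cancel_left _ hPpos]
      rw [hqj, hmdiv] at hPa_term
      have hPa2 : P ^ (a - 1) * P ∣ P ^ (a - 1) * (R * d j₀) := by
        have : P ^ (a - 1) * P = P ^ a := by
          conv_rhs => rw [show a = (a - 1) + 1 from (Nat.succ_pred_eq_of_pos (hα j')).symm]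
          rw [pow_succ]
        rw [this, ← mul_assoc]
        exact hPa_term
      have hPdvd : P ∣ R * d j₀ :=
        (mul_dvd_mul_iff_left (pow_ne_zero _ hPpos.ne')).mp hPa2
      have hPd : P ∣ d j₀ := hcop.dvd_of_dvd_mul_left hPdvd
      have hdlt : d j₀ < P := lt_of_le_of_lt (Nat.sub_le _ _) (hZ j₀)
      exact Nat.eq_zero_of_dvd_of_lt hPd hdlt
    -- deficits zero ⇒ all t = 1
    intro j i hi
    have hsum : ∑ i ∈ Z j, t j i = (Z j).card :=
      le_antisymm (hsumle j) (Nat.le_of_sub_eq_zero (hdzero j))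
    by_contra hne
    have hti : t j i = 0 := by have := ht j i hi; omega
    have hlt : ∑ i ∈ Z j, t j i < ∑ i ∈ Z j, 1 :=
      Finset.sum_lt_sum (ht j) ⟨i, hi, by omega⟩
    simp only [Finset.sum_const, smul_eq_mul, mul_one] at hlt
    omega
  · intro h
    have : ∀ j, ∑ i ∈ Z j, t j i = (Z j).card := by
      intro j
      calc ∑ i ∈ Z j, t j i = ∑ i ∈ Z j, 1 :=
        Finset.sum_congr rfl (h j)
      _ = (Z j).card := by simp
    congr 1
    exact Finset.sum_congr rfl fun j _ => by rw [← Finset.mul_sum, this j]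
end

section
/- Let γ : ℕ → ℕ be increasing, and suppose every nonconstant boolean function computable by a circuit of size s in a given class, when restricted to a spike by fixing at most log₂|S(f)| variables, still requires size γ(n − log₂|S(f)|) ≤ s where n is the arity. Then for any nonconstant n-ary f computable by a circuit of size s, |f⁻¹(1)| ≥ |S(f)| ≥ 2^{n − γ⁻¹(s)}; equivalently bal(f) ≥ 2^{1 − γ⁻¹(s)}. -/
/-- If spikes of arity `r` require circuits of size `≥ γ(r)` (γ increasing), so
that a nonconstant `f` computable in size `s` satisfies
`γ(n − log₂|S(f)|) ≤ s`, then `|f⁻¹(1)| ≥ |S(f)| ≥ 2^{n − γ⁻¹(s)}`;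
equivalently `bal(f) ≥ 2^{1 − γ⁻¹(s)}`. -/
theorem stmt_17 (γ : ℕ → ℕ) (hγ : StrictMono γ) (γinv : ℕ → ℕ)
    (hγinv : ∀ s, γinv s = sSup {r | γ r ≤ s})
    (n s : ℕ) (f : (Fin n → Bool) → Bool) (hnc : ∃ x y, f x ≠ f y)
    (hspike : γ (n - Nat.log 2
        (min (Finset.univ.filter fun x : Fin n → Bool => f x = true).card
             (Finset.univ.filter fun x : Fin n → Bool => f x = false).card)) ≤ s) :
    2 ^ (n - γinv s)
        ≤ min (Finset.univ.filter fun x : Fin n → Bool => f x = true).card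
              (Finset.univ.filter fun x : Fin n → Bool => f x = false).card ∧
    min (Finset.univ.filter fun x : Fin n → Bool => f x = true).card
        (Finset.univ.filter fun x : Fin n → Bool => f x = false).card
      ≤ (Finset.univ.filter fun x : Fin n → Bool => f x = true).card ∧
    (2 : ℚ) ^ (1 - (γinv s : ℤ))
      ≤ 1 - |((Finset.univ.filter fun x : Fin n → Bool => f x = true).card : ℚ)
              - ((Finset.univ.filter fun x : Fin n → Bool => f x = false).card : ℚ)|
            / 2 ^ n := by
  set c1 := (Finset.univ.filter fun x : Fin n → Bool => f x = true).card with hc1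
  set c0 := (Finset.univ.filter fun x : Fin n → Bool => f x = false).card with hc0
  -- sum of cards
  have hsum : c1 + c0 = 2 ^ n := by
    rw [hc1, hc0]
    have := Finset.card_filter_add_card_filter_not
      (s := (Finset.univ : Finset (Fin n → Bool))) (p := fun x => f x = true)
    simp only [Bool.not_eq_true] at this
    rw [this, Finset.card_univ]
    simp
  -- nonconstancy: both nonempty
  have hm1 : 1 ≤ min c1 c0 := by
    obtain ⟨x, y, hxy⟩ := hnc
    have h1 : 1 ≤ c1 := by
      rw [hc1, Nat.one_le_iff_ne_zero, Ne, Finset.card_eq_zero,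
        Finset.filter_eq_empty_iff]
      intro h
      cases hfx : f x <;> cases hfy : f y <;>
        simp_all [h (Finset.mem_univ x), h (Finset.mem_univ y)]
    have h0 : 1 ≤ c0 := by
      rw [hc0, Nat.one_le_iff_ne_zero, Ne, Finset.card_eq_zero,
        Finset.filter_eq_empty_iff]
      intro h
      cases hfx : f x <;> cases hfy : f y <;>
        simp_all [h (Finset.mem_univ x), h (Finset.mem_univ y)]
    omega
  set m := min c1 c0 with hm
  set L := Nat.log 2 m with hL
  -- γinv s ≥ n - L
  have hbdd : BddAbove {r | γ r ≤ s} := ⟨s, fun r hr => le_trans hγ.le_apply hr⟩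
  have hge : n - L ≤ γinv s := by
    rw [hγinv]
    exact le_csSup hbdd hspike
  have hexp : n - γinv s ≤ L := by omega
  have key : 2 ^ (n - γinv s) ≤ m := by
    calc 2 ^ (n - γinv s) ≤ 2 ^ L := Nat.pow_le_pow_right (by norm_num) hexp
    _ ≤ m := Nat.pow_log_le_self 2 (by omega)
  refine ⟨key, min_le_left _ _, ?_⟩
  -- rationals
  have habs : |((c1 : ℚ)) - (c0 : ℚ)| = (2 ^ n : ℚ) - 2 * m := by
    rcases le_total c1 c0 with h | h
    · rw [abs_sub_comm, abs_of_nonneg (sub_nonneg.mpr (by exact_mod_cast h))]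
      have : m = c1 := by omega
      push_cast [this]
      have : (c1 : ℚ) + c0 = 2 ^ n := by exact_mod_cast hsum
      linarith
    · rw [abs_of_nonneg (sub_nonneg.mpr (by exact_mod_cast h))]
      have : m = c0 := by omega
      push_cast [this]
      have : (c1 : ℚ) + c0 = 2 ^ n := by exact_mod_cast hsum
      linarith
  rw [habs]
  have h2n : (0:ℚ) < 2 ^ n := by positivity
  have hrhs : 1 - ((2:ℚ) ^ n - 2 * m) / 2 ^ n = 2 * m / 2 ^ n := by
    field_simp
    ring
  rw [hrhs, le_div_iff₀ h2n]
  have h1 : (2:ℚ) ^ (1 - (γinv s : ℤ)) * 2 ^ n = 2 ^ (1 + (n:ℤ) - γinv s) := by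
    rw [← zpow_natCast (2:ℚ) n, ← zpow_add₀ (by norm_num : (2:ℚ) ≠ 0)]
    ring_nf
  rw [h1]
  have h2 : (1 + (n:ℤ) - γinv s) ≤ ((n - γinv s : ℕ) + 1 : ℕ) := by
    push_cast; omega
  calc (2:ℚ) ^ (1 + (n:ℤ) - γinv s) ≤ 2 ^ (((n - γinv s : ℕ) + 1 : ℕ) : ℤ) :=
        zpow_le_zpow_right₀ (by norm_num) h2
    _ = 2 * 2 ^ (n - γinv s : ℕ) := by
        rw [zpow_natCast]; ring
    _ ≤ 2 * m := by
        have : ((2:ℕ) ^ (n - γinv s) : ℚ) ≤ m := by exact_mod_cast key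
        push_cast at this ⊢
        linarith
end
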